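/- Let T : [0,1] → [0,1] be defined by T(x) = i(i+1)·x − i for x ∈ [1/(i+1), 1/i), i = 1, 2, …, and T(0) = 0, T(1) = 1. Then Lebesgue measure λ on [0,1] is T-invariant: λ(T⁻¹(A)) = λ(A) for every Borel set A ⊆ [0,1]. -/
import Mathlib


open MeasureTheory Set Filter

/-- Lebesgue measure on the unit interval `I = [0,1]`. -/
noncomputable def lam : MeasureTheory.Measure ℝ := MeasureTheory.volume.restrict (Set.Icc 0 1)

lemma vol_affine (a b : ℝ) (ha : a ≠ 0) (S : Set ℝ) :
    volume ((fun x => a * x + b) ⁻¹' S) = ENNReal.ofReal |a⁻¹| * volume S := by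
  have : (fun x => a * x + b) ⁻¹' S = (a * ·) ⁻¹' ((fun y => y + b) ⁻¹' S) := by
    ext x; simp
  rw [this, Real.volume_preimage_mul_left ha, measure_preimage_add_right]

lemma telescope_sum : HasSum (fun i : ℕ => (((i:ℝ)+1) * ((i:ℝ)+2))⁻¹) 1 := by
  have key : ∀ i : ℕ, (((i:ℝ)+1) * ((i:ℝ)+2))⁻¹ = ((i:ℝ)+1)⁻¹ - ((i:ℝ)+1+1)⁻¹ := by
    intro i
    have h1 : ((i:ℝ)+1) ≠ 0 := by positivity
    have h2 : ((i:ℝ)+2) ≠ 0 := by positivity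
    rw [show ((i:ℝ)+1+1) = (i:ℝ)+2 by ring, inv_sub_inv h1 h2,
      show ((i:ℝ)+2) - ((i:ℝ)+1) = 1 by ring, one_div]
  have := hasSum_iff_tendsto_nat_of_nonneg (f := fun i : ℕ => (((i:ℝ)+1) * ((i:ℝ)+2))⁻¹)
    (by intro i; positivity) 1
  rw [this]
  have hsum : ∀ n : ℕ, ∑ i ∈ Finset.range n, (((i:ℝ)+1) * ((i:ℝ)+2))⁻¹ = 1 - ((n:ℝ)+1)⁻¹ := by
    intro n
    calc ∑ i ∈ Finset.range n, (((i:ℝ)+1) * ((i:ℝ)+2))⁻¹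
        = ∑ i ∈ Finset.range n, ((((i:ℕ):ℝ)+1)⁻¹ - (((i+1:ℕ):ℝ)+1)⁻¹) := by
          refine Finset.sum_congr rfl fun i _ => ?_
          rw [key i]; push_cast; ring_nf
      _ = (((0:ℕ):ℝ)+1)⁻¹ - (((n:ℕ):ℝ)+1)⁻¹ := Finset.sum_range_sub' (fun i : ℕ => ((i:ℝ)+1)⁻¹) n
      _ = 1 - ((n:ℝ)+1)⁻¹ := by norm_num
  simp only [hsum]
  have : Tendsto (fun n : ℕ => ((n:ℝ)+1)⁻¹) atTop (nhds 0) :=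
    tendsto_one_div_add_atTop_nhds_zero_nat.congr (fun n => by rw [one_div])
  simpa using (tendsto_const_nhds.sub this)

lemma ennreal_sum : ∑' i : ℕ, ENNReal.ofReal (((i:ℝ) * ((i:ℝ)+1))⁻¹) = 1 := by
  rw [tsum_eq_zero_add' (f := fun i : ℕ => ENNReal.ofReal (((i:ℝ) * ((i:ℝ)+1))⁻¹))
    ENNReal.summable]
  have h0 : ENNReal.ofReal (((0:ℕ):ℝ) * (((0:ℕ):ℝ)+1))⁻¹ = 0 := by norm_num
  rw [h0, zero_add]
  have hc : ∀ n : ℕ, ENNReal.ofReal ((((n+1:ℕ):ℝ)) * (((n+1:ℕ):ℝ)+1))⁻¹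
      = ENNReal.ofReal ((((n:ℝ)+1) * ((n:ℝ)+2))⁻¹) := by
    intro n; push_cast; ring_nf
  rw [tsum_congr hc, ← ENNReal.ofReal_tsum_of_nonneg (fun n => by positivity)
    telescope_sum.summable, telescope_sum.tsum_eq, ENNReal.ofReal_one]

lemma preim_Ico (i : ℕ) (hi : 1 ≤ i) :
    (fun x : ℝ => (i:ℝ) * ((i:ℝ)+1) * x - i) ⁻¹' (Ico 0 1)
      = Ico (1/((i:ℝ)+1)) (1/(i:ℝ)) := by
  have hi' : (1:ℝ) ≤ (i:ℝ) := by exact_mod_cast hi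
  have h0 : (0:ℝ) < (i:ℝ) := by linarith
  have h1 : (0:ℝ) < (i:ℝ)+1 := by linarith
  have hii : (0:ℝ) < (i:ℝ) * ((i:ℝ)+1) := by positivity
  ext x
  simp only [mem_preimage, mem_Ico]
  rw [div_le_iff₀ h1, lt_div_iff₀ h0]
  constructor
  · rintro ⟨ha, hb⟩
    have hx0 : 0 < x := by
      by_contra hx
      push_neg at hx
      nlinarith [mul_nonneg hii.le (neg_nonneg.mpr hx)]
    constructor <;> nlinarith
  · rintro ⟨ha, hb⟩
    constructor <;> nlinarith

lemma union_Ico : (⋃ i : ℕ, Ico (1/((i:ℝ)+1)) (1/(i:ℝ))) = Ioo (0:ℝ) 1 := by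
  ext x
  simp only [mem_iUnion, mem_Ico, mem_Ioo]
  constructor
  · rintro ⟨i, ha, hb⟩
    rcases Nat.eq_zero_or_pos i with rfl | hi
    · simp at ha hb; linarith [lt_of_le_of_lt ha hb]
    have hi' : (1:ℝ) ≤ (i:ℝ) := by exact_mod_cast hi
    have h1 : (0:ℝ) < (i:ℝ)+1 := by linarith
    refine ⟨lt_of_lt_of_le (by positivity) ha, lt_of_lt_of_le hb ?_⟩
    rw [div_le_one (by linarith)]; exact hi'
  · rintro ⟨h0, h1⟩
    set i : ℕ := ⌈1/x⌉₊ - 1 with hidef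
    have hx : (1:ℝ) < 1/x := by rw [lt_div_iff₀ h0]; linarith
    have hc2 : 2 ≤ ⌈1/x⌉₊ := by
      have : 1 < ⌈1/x⌉₊ := Nat.lt_ceil.mpr (by push_cast; exact hx)
      omega
    have hi1 : 1 ≤ i := by omega
    have hipos : (0:ℝ) < (i:ℝ) := by exact_mod_cast hi1
    have hceil : (i:ℝ) + 1 = (⌈1/x⌉₊ : ℝ) := by
      have : i + 1 = ⌈1/x⌉₊ := by omega
      exact_mod_cast this
    have hone : x * (1/x) = 1 := by field_simp
    have hxi : 1/x ≤ (i:ℝ)+1 := by rw [hceil]; exact Nat.le_ceil _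
    have hlt : (i:ℝ) < 1/x := by
      have h2 := Nat.ceil_lt_add_one (le_of_lt (by positivity : (0:ℝ) < 1/x))
      have h3 : (i:ℝ) = (⌈1/x⌉₊:ℝ) - 1 := by linarith [hceil]
      linarith
    refine ⟨i, ?_, ?_⟩
    · rw [div_le_iff₀ (by linarith : (0:ℝ) < (i:ℝ)+1)]
      nlinarith [mul_le_mul_of_nonneg_left hxi (le_of_lt h0)]
    · rw [lt_div_iff₀ hipos]
      nlinarith [mul_lt_mul_of_pos_left hlt h0]

/-- The piecewise linear map `T x = i(i+1)x − i` on `[1/(i+1), 1/i)`, `i = 1, 2, …`, with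
`T 0 = 0` and `T 1 = 1`, preserves Lebesgue measure on `[0,1]`. -/
theorem stmt17 (T : ℝ → ℝ)
    (hT0 : T 0 = 0) (hT1 : T 1 = 1)
    (hT : ∀ i : ℕ, 1 ≤ i → ∀ x ∈ Set.Ico (1 / ((i:ℝ) + 1)) (1 / (i:ℝ)),
      T x = (i:ℝ) * ((i:ℝ) + 1) * x - (i:ℝ)) :
    ∀ A : Set ℝ, MeasurableSet A → A ⊆ Set.Icc (0:ℝ) 1 → lam (T ⁻¹' A) = lam A := by
  intro A hA hA1
  set B : Set ℝ := A ∩ Ico 0 1 with hBdef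
  have hBm : MeasurableSet B := hA.inter measurableSet_Ico
  have hBA : volume B = lam A := by
    rw [lam, Measure.restrict_apply' measurableSet_Icc, inter_eq_self_of_subset_left hA1]
    refine le_antisymm (measure_mono inter_subset_left) ?_
    calc volume A ≤ volume (B ∪ {1}) := by
          refine measure_mono fun x hx => ?_
          rcases eq_or_ne x 1 with rfl | hne
          · exact Or.inr rfl
          · exact Or.inl ⟨hx, (hA1 hx).1, lt_of_le_of_ne (hA1 hx).2 hne⟩
      _ ≤ volume B + volume ({1} : Set ℝ) := measure_union_le _ _
      _ = volume B := by simp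
  set g : ℕ → Set ℝ := fun i =>
    (fun x : ℝ => (i:ℝ) * ((i:ℝ)+1) * x - i) ⁻¹' B ∩ Ico (1/((i:ℝ)+1)) (1/(i:ℝ)) with hgdef
  have hgm : ∀ i, MeasurableSet (g i) := by
    intro i
    exact (((measurable_id.const_mul _).sub_const _) hBm).inter measurableSet_Ico
  have hg_eq : ∀ i : ℕ, 1 ≤ i → g i = (fun x : ℝ => (i:ℝ) * ((i:ℝ)+1) * x - i) ⁻¹' B := by
    intro i hi
    have hsub : (fun x : ℝ => (i:ℝ) * ((i:ℝ)+1) * x - i) ⁻¹' B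
        ⊆ Ico (1/((i:ℝ)+1)) (1/(i:ℝ)) := by
      rw [← preim_Ico i hi]
      exact preimage_mono inter_subset_right
    exact inter_eq_left.mpr hsub
  have hg_vol : ∀ i : ℕ, volume (g i) = ENNReal.ofReal (((i:ℝ) * ((i:ℝ)+1))⁻¹) * volume B := by
    intro i
    rcases Nat.eq_zero_or_pos i with rfl | hi
    · have : g 0 = ∅ := by
        simp only [hgdef]
        norm_num
      rw [this]
      norm_num
    · have hi' : (1:ℝ) ≤ (i:ℝ) := by exact_mod_cast hi
      have hii : (0:ℝ) < (i:ℝ) * ((i:ℝ)+1) := by nlinarith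
      rw [hg_eq i hi]
      have hfe : (fun x : ℝ => (i:ℝ) * ((i:ℝ)+1) * x - i)
          = (fun x : ℝ => ((i:ℝ) * ((i:ℝ)+1)) * x + (-(i:ℝ))) := by
        funext x; ring
      rw [hfe, vol_affine _ _ (ne_of_gt hii), abs_of_pos (inv_pos.mpr hii)]
  have hdisj : Pairwise (Function.onFun Disjoint g) := by
    have key : ∀ i j : ℕ, i < j → Disjoint (g i) (g j) := by
      intro i j hij
      refine Disjoint.mono inter_subset_right inter_subset_right ?_
      rw [Set.Ico_disjoint_Ico]
      have hj : (0:ℝ) < (j:ℝ) := by exact_mod_cast (by omega : 0 < j)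
      have hij' : (i:ℝ) + 1 ≤ (j:ℝ) := by exact_mod_cast hij
      have : 1/(j:ℝ) ≤ 1/((i:ℝ)+1) := by
        apply one_div_le_one_div_of_le (by linarith) hij'
      exact le_trans (min_le_right _ _) (le_trans this (le_max_left _ _))
    intro i j hij
    rcases lt_or_gt_of_ne hij with h | h
    · exact key i j h
    · exact (key j i h).symm
  have hTpre : T ⁻¹' A ∩ Ioo 0 1 = ⋃ i, g i := by
    ext x
    constructor
    · rintro ⟨hxA, hxI⟩
      rw [← union_Ico] at hxI
      obtain ⟨s, ⟨i, rfl⟩, hxi⟩ := hxI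
      have hi : 1 ≤ i := by
        rcases Nat.eq_zero_or_pos i with rfl | h
        · exfalso
          rw [mem_Ico] at hxi
          norm_num at hxi
          linarith [hxi.1, hxi.2]
        · exact h
      refine mem_iUnion.mpr ⟨i, ?_, hxi⟩
      have hTx := hT i hi x hxi
      have hx01 : x ∈ (fun x : ℝ => (i:ℝ) * ((i:ℝ)+1) * x - i) ⁻¹' (Ico 0 1) := by
        rw [preim_Ico i hi]
        exact hxi
      exact mem_preimage.mpr ⟨by rw [← hTx]; exact hxA, hx01⟩
    · intro hx
      obtain ⟨s, ⟨i, rfl⟩, hxi⟩ := hx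
      obtain ⟨hxB, hxIco⟩ := hxi
      have hi : 1 ≤ i := by
        rcases Nat.eq_zero_or_pos i with rfl | h
        · exfalso
          rw [mem_Ico] at hxIco
          norm_num at hxIco
          linarith [hxIco.1, hxIco.2]
        · exact h
      have hxIoo : x ∈ Ioo (0:ℝ) 1 := by
        rw [← union_Ico]
        exact mem_iUnion.mpr ⟨i, hxIco⟩
      refine ⟨?_, hxIoo⟩
      rw [mem_preimage, hT i hi x hxIco]
      exact hxB.1
  have hend : volume ({0, 1} : Set ℝ) = 0 := by
    rw [show ({0,1} : Set ℝ) = {0} ∪ {1} from rfl]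
    exact measure_union_null Real.volume_singleton Real.volume_singleton
  have hmain : lam (T ⁻¹' A) = volume (T ⁻¹' A ∩ Ioo 0 1) := by
    rw [lam, Measure.restrict_apply' measurableSet_Icc]
    refine le_antisymm ?_ (measure_mono (inter_subset_inter_right _ Ioo_subset_Icc_self))
    calc volume (T ⁻¹' A ∩ Icc 0 1)
        ≤ volume ((T ⁻¹' A ∩ Ioo 0 1) ∪ ({0, 1} : Set ℝ)) := by
          refine measure_mono fun x hx => ?_
          rcases eq_or_ne x 0 with rfl | h0
          · exact Or.inr (Or.inl rfl)
          rcases eq_or_ne x 1 with rfl | h1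
          · exact Or.inr (Or.inr rfl)
          exact Or.inl ⟨hx.1, lt_of_le_of_ne hx.2.1 (Ne.symm h0), lt_of_le_of_ne hx.2.2 h1⟩
      _ ≤ volume (T ⁻¹' A ∩ Ioo 0 1) + volume ({0, 1} : Set ℝ) := measure_union_le _ _
      _ = volume (T ⁻¹' A ∩ Ioo 0 1) := by rw [hend, add_zero]
  rw [hmain, hTpre, measure_iUnion hdisj hgm]
  calc ∑' i, volume (g i)
      = ∑' i : ℕ, ENNReal.ofReal (((i:ℝ) * ((i:ℝ)+1))⁻¹) * volume B := tsum_congr hg_vol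
    _ = (∑' i : ℕ, ENNReal.ofReal (((i:ℝ) * ((i:ℝ)+1))⁻¹)) * volume B := ENNReal.tsum_mul_right
    _ = volume B := by rw [ennreal_sum, one_mul]
    _ = lam A := hBA
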